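/- Assume k = 4. Let γ_{ch} = σ(η) γ^0 γ^1 γ^2 γ^3 with σ(η) = (−i)^{(q−p)(q−p+1)/2}, and assume γ_{ch}² = 1_4. Let 𝖪_μ, 𝖠_μ ∈ M_m(ℂ), define 𝔡_μ = {𝖪_μ + 𝖠_μ, ·}_{e_μ} on M_m(ℂ) and θ = Σ_{μ,ν} η^{μν} 𝔡_μ ∘ 𝔡_ν, let Φ be any linear operator on M_m(ℂ), and set D_ω = Σ_μ γ^μ ⊗ 𝔡_μ + γ_{ch} ⊗ Φ on ℂ⁴ ⊗ M_m(ℂ). Then (1/4)·Tr(D_ω²) = Tr(θ + Φ∘Φ), where the left-hand trace is the trace of the linear endomorphism D_ω² of ℂ⁴ ⊗ M_m(ℂ) and the right-hand trace is the trace of a linear endomorphism of M_m(ℂ). (Paper: Lemma 6.4, trace of the square of the fully fluctuated Dirac operator.) -/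
import Mathlib


open Matrix

noncomputable section

/-- The operator `g ⊗ T` on `ℂ^k ⊗ M_m(ℂ) ≅ (Fin k → M_m(ℂ))`. -/
def matOp {k : ℕ} {V : Type*} [AddCommGroup V] [Module ℂ V]
    (g : Matrix (Fin k) (Fin k) ℂ) (T : Module.End ℂ V) :
    Module.End ℂ (Fin k → V) where
  toFun f i := ∑ j, g i j • T (f j)
  map_add' f h := by
    funext i
    simp [map_add, smul_add, Finset.sum_add_distrib]
  map_smul' c f := by
    funext i
    simp only [Pi.smul_apply, _root_.map_smul, RingHom.id_apply]
    rw [Finset.smul_sum]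
    exact Finset.sum_congr rfl fun j _ => smul_comm _ _ _

/-- The generalized (anti-)commutator `{M, ·}_e : T ↦ M T + e T M`. -/
def brkt {m : ℕ} (M : Matrix (Fin m) (Fin m) ℂ) (e : ℂ) :
    Module.End ℂ (Matrix (Fin m) (Fin m) ℂ) :=
  LinearMap.mulLeft ℂ M + e • LinearMap.mulRight ℂ M


lemma matOp_mul {k : ℕ} {V : Type*} [AddCommGroup V] [Module ℂ V]
    (g h : Matrix (Fin k) (Fin k) ℂ) (T S : Module.End ℂ V) :
    matOp g T * matOp h S = matOp (g * h) (T * S) := by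
  apply LinearMap.ext; intro f; funext i
  simp only [Module.End.mul_apply, matOp, LinearMap.coe_mk, AddHom.coe_mk,
    Matrix.mul_apply, map_sum, _root_.map_smul, Finset.smul_sum, Finset.sum_smul, smul_smul]
  rw [Finset.sum_comm]

lemma matOp_eq_sum {k : ℕ} {V : Type*} [AddCommGroup V] [Module ℂ V]
    (g : Matrix (Fin k) (Fin k) ℂ) (T : Module.End ℂ V) :
    matOp g T = ∑ i, ∑ j, g i j •
      ((LinearMap.single ℂ (fun _ : Fin k => V) i) ∘ₗ T ∘ₗ (LinearMap.proj j)) := by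
  apply LinearMap.ext; intro f; funext i
  simp only [matOp, LinearMap.coe_mk, AddHom.coe_mk, LinearMap.sum_apply,
    LinearMap.smul_apply, LinearMap.comp_apply, LinearMap.proj_apply,
    LinearMap.single_apply, Finset.sum_apply, Pi.smul_apply]
  rw [Finset.sum_comm]
  refine Finset.sum_congr rfl fun j _ => ?_
  simp [Pi.single_apply]

lemma trace_matOp {k : ℕ} {V : Type*} [AddCommGroup V] [Module ℂ V]
    [Module.Finite ℂ V] [Module.Free ℂ V]
    (g : Matrix (Fin k) (Fin k) ℂ) (T : Module.End ℂ V) :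
    LinearMap.trace ℂ (Fin k → V) (matOp g T) = g.trace * LinearMap.trace ℂ V T := by
  rw [matOp_eq_sum, map_sum]
  have key : ∀ i j : Fin k,
      LinearMap.trace ℂ (Fin k → V)
        ((LinearMap.single ℂ (fun _ : Fin k => V) i) ∘ₗ T ∘ₗ (LinearMap.proj j))
        = if j = i then LinearMap.trace ℂ V T else 0 := by
    intro i j
    rw [LinearMap.trace_comp_comm']
    have : (T ∘ₗ (LinearMap.proj j : (Fin k → V) →ₗ[ℂ] V)) ∘ₗ
        (LinearMap.single ℂ (fun _ : Fin k => V) i)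
        = if j = i then T else 0 := by
      apply LinearMap.ext; intro v
      by_cases hji : j = i <;> simp [hji, Pi.single_apply]
    rw [this]
    split <;> simp
  calc ∑ i, LinearMap.trace ℂ (Fin k → V) (∑ j, g i j • ((LinearMap.single ℂ (fun _ : Fin k => V) i) ∘ₗ T ∘ₗ (LinearMap.proj j)))
      = ∑ i, ∑ j, g i j • (if j = i then LinearMap.trace ℂ V T else 0) := by
        refine Finset.sum_congr rfl fun i _ => ?_
        rw [map_sum]
        exact Finset.sum_congr rfl fun j _ => by rw [_root_.map_smul, key]
    _ = ∑ i, g i i * LinearMap.trace ℂ V T := by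
        refine Finset.sum_congr rfl fun i _ => ?_
        simp
    _ = g.trace * LinearMap.trace ℂ V T := by
        rw [Matrix.trace, Finset.sum_mul]; rfl

theorem stmt17 (p q m : ℕ) (hpq : p + q = 4) (hm : 1 ≤ m)
    (e : Fin 4 → ℂ) (he : ∀ μ, e μ = if (μ : ℕ) < p then 1 else -1)
    (γ : Fin 4 → Matrix (Fin 4) (Fin 4) ℂ)
    (hCl : ∀ μ ν, γ μ * γ ν + γ ν * γ μ =
      (2 * if μ = ν then e μ else 0) • (1 : Matrix (Fin 4) (Fin 4) ℂ))
    (hAdj : ∀ μ, (γ μ)ᴴ = e μ • γ μ)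
    (γch : Matrix (Fin 4) (Fin 4) ℂ)
    (hγch : γch =
      ((-Complex.I) ^ ((((q : ℤ) - (p : ℤ)) * ((q : ℤ) - (p : ℤ) + 1)) / 2)) •
        (γ 0 * γ 1 * γ 2 * γ 3))
    (hγch2 : γch * γch = 1)
    (K A : Fin 4 → Matrix (Fin m) (Fin m) ℂ)
    (dop : Fin 4 → Module.End ℂ (Matrix (Fin m) (Fin m) ℂ))
    (hdop : ∀ μ, dop μ = brkt (K μ + A μ) (e μ))
    (θ : Module.End ℂ (Matrix (Fin m) (Fin m) ℂ))
    (hθ : θ = ∑ μ, ∑ ν, (if μ = ν then e μ else 0) • (dop μ * dop ν))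
    (Φ : Module.End ℂ (Matrix (Fin m) (Fin m) ℂ))
    (Dω : Module.End ℂ (Fin 4 → Matrix (Fin m) (Fin m) ℂ))
    (hDω : Dω = (∑ μ, matOp (γ μ) (dop μ)) + matOp γch Φ) :
    (1 / 4 : ℂ) * LinearMap.trace ℂ (Fin 4 → Matrix (Fin m) (Fin m) ℂ) (Dω * Dω) =
      LinearMap.trace ℂ (Matrix (Fin m) (Fin m) ℂ) (θ + Φ * Φ) := by
  -- basic Clifford consequences
  have sqγ : ∀ μ, γ μ * γ μ = e μ • (1 : Matrix (Fin 4) (Fin 4) ℂ) := by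
    intro μ
    have h := hCl μ μ
    simp only [eq_self_iff_true, if_true] at h
    have h2 : (2 : ℂ) • (γ μ * γ μ) = (2 : ℂ) • (e μ • (1 : Matrix (Fin 4) (Fin 4) ℂ)) := by
      rw [two_smul, h, smul_smul]
    exact smul_right_injective _ (by norm_num) h2
  have ac : ∀ μ ν, μ ≠ ν → γ μ * γ ν = -(γ ν * γ μ) := by
    intro μ ν h
    have hc := hCl μ ν
    rw [if_neg h] at hc
    simp only [mul_zero, zero_smul] at hc
    exact eq_neg_of_add_eq_zero_left hc
  have mv : ∀ μ ν, μ ≠ ν → ∀ X : Matrix (Fin 4) (Fin 4) ℂ,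
      γ ν * (γ μ * X) = -(γ μ * (γ ν * X)) := by
    intro μ ν h X
    rw [← mul_assoc, ac ν μ (Ne.symm h), neg_mul, mul_assoc]
  have sqX : ∀ μ (X : Matrix (Fin 4) (Fin 4) ℂ), γ μ * (γ μ * X) = e μ • X := by
    intro μ X
    rw [← mul_assoc, sqγ, smul_mul_assoc, one_mul]
  -- γch anticommutes with each γ μ
  have hP : ∀ μ, γ μ * (γ 0 * γ 1 * γ 2 * γ 3) = -((γ 0 * γ 1 * γ 2 * γ 3) * γ μ) := by
    intro μ
    fin_cases μ <;>
      simp only [mul_assoc] <;>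
      simp [ac 1 0 (by decide), ac 2 0 (by decide), ac 3 0 (by decide),
        ac 2 1 (by decide), ac 3 1 (by decide), ac 3 2 (by decide),
        mv 0 1 (by decide), mv 0 2 (by decide), mv 0 3 (by decide),
        mv 1 2 (by decide), mv 1 3 (by decide), mv 2 3 (by decide),
        sqX, mul_neg, neg_neg, mul_smul_comm, smul_mul_assoc]
  have hchA : ∀ μ, γ μ * γch = -(γch * γ μ) := by
    intro μ
    rw [hγch, mul_smul_comm, smul_mul_assoc, hP μ, smul_neg]
  -- trace identities for gamma matrices
  have trγγ : ∀ μ ν, (γ μ * γ ν).trace = 4 * (if μ = ν then e μ else 0) := by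
    intro μ ν
    have h := congrArg Matrix.trace (hCl μ ν)
    rw [Matrix.trace_add, Matrix.trace_smul, Matrix.trace_one,
      Matrix.trace_mul_comm (γ ν) (γ μ)] at h
    have h4 : ((Fintype.card (Fin 4) : ℂ)) = 4 := by simp
    rw [h4] at h
    have := h
    simp only [smul_eq_mul] at this
    linear_combination (1/2 : ℂ) * this
  have trγch : ∀ μ, (γ μ * γch).trace = 0 := by
    intro μ
    have h1 : (γ μ * γch).trace = (γch * γ μ).trace := Matrix.trace_mul_comm _ _
    have h2 := congrArg Matrix.trace (hchA μ)
    rw [Matrix.trace_neg] at h2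
    linear_combination (h1 + h2) / 2
  have trγch' : ∀ μ, (γch * γ μ).trace = 0 := fun μ =>
    (Matrix.trace_mul_comm γch (γ μ)).trans (trγch μ)
  have trγch2 : (γch * γch).trace = (4 : ℂ) := by
    rw [hγch2, Matrix.trace_one]; simp
  -- expand Dω * Dω
  have expand : Dω * Dω =
      (∑ μ, ∑ ν, matOp (γ μ * γ ν) (dop μ * dop ν)) +
      (∑ μ, matOp (γ μ * γch) (dop μ * Φ)) +
      (∑ μ, matOp (γch * γ μ) (Φ * dop μ)) +
      matOp (γch * γch) (Φ * Φ) := by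
    rw [hDω, add_mul, mul_add, mul_add, Finset.sum_mul_sum, Finset.sum_mul, Finset.mul_sum]
    simp only [matOp_mul]
    abel
  rw [expand]
  simp only [map_add, map_sum, trace_matOp, trγch, trγch', trγγ, trγch2, zero_mul,
    Finset.sum_const_zero, add_zero, zero_add]
  rw [hθ]
  simp only [map_sum, _root_.map_smul, smul_eq_mul]
  rw [mul_add, Finset.mul_sum]
  congr 1
  · refine Finset.sum_congr rfl fun μ _ => ?_
    rw [Finset.mul_sum]
    refine Finset.sum_congr rfl fun ν _ => ?_
    ring
  · ring
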